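/- For each k ∈ ℤ_{≥0}, the element η_k = R_q^k(I) of the Weyl algebra is a polynomial in the number operator N of exact degree k; that is, there exists a unique polynomial ω_k ∈ ℂ[t] of degree exactly k with η_k = ω_k(N). Consequently, the subspace {p(R_q)(I) : p ∈ ℂ[t]} of the Weyl algebra equals ℂ[N] and is independent of q. -/

import Mathlib

/-- The defining relations (CCR) of the Weyl algebra `W_{2d}`: generators `a_j` are
indexed by `Sum.inl j` and `a_j⁺` by `Sum.inr j`. -/
inductive WeylRel (d : ℕ) :
    FreeAlgebra ℂ (Fin d ⊕ Fin d) → FreeAlgebra ℂ (Fin d ⊕ Fin d) → Prop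
  | ccr (j k : Fin d) :
      WeylRel d (FreeAlgebra.ι ℂ (Sum.inl j) * FreeAlgebra.ι ℂ (Sum.inr k))
        (FreeAlgebra.ι ℂ (Sum.inr k) * FreeAlgebra.ι ℂ (Sum.inl j) +
          if j = k then 1 else 0)
  | aa (j k : Fin d) :
      WeylRel d (FreeAlgebra.ι ℂ (Sum.inl j) * FreeAlgebra.ι ℂ (Sum.inl k))
        (FreeAlgebra.ι ℂ (Sum.inl k) * FreeAlgebra.ι ℂ (Sum.inl j))
  | pp (j k : Fin d) :
      WeylRel d (FreeAlgebra.ι ℂ (Sum.inr j) * FreeAlgebra.ι ℂ (Sum.inr k))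
        (FreeAlgebra.ι ℂ (Sum.inr k) * FreeAlgebra.ι ℂ (Sum.inr j))

/-- The Weyl algebra `W_{2d}`. -/
abbrev WeylAlgebra (d : ℕ) := RingQuot (WeylRel d)

/-- The annihilation generators `a_j`. -/
noncomputable def wA (d : ℕ) (j : Fin d) : WeylAlgebra d :=
  RingQuot.mkAlgHom ℂ (WeylRel d) (FreeAlgebra.ι ℂ (Sum.inl j))

/-- The creation generators `a_j⁺`. -/
noncomputable def wAp (d : ℕ) (j : Fin d) : WeylAlgebra d :=
  RingQuot.mkAlgHom ℂ (WeylRel d) (FreeAlgebra.ι ℂ (Sum.inr j))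

/-- The number operator `N = Σ_j a_j⁺ a_j`. -/
noncomputable def numberOp (d : ℕ) : WeylAlgebra d := ∑ j, wAp d j * wA d j

open Polynomial

-- relations in the quotient
lemma wccr (d : ℕ) (j k : Fin d) :
    wA d j * wAp d k = wAp d k * wA d j + if j = k then 1 else 0 := by
  have h := RingQuot.mkAlgHom_rel ℂ (WeylRel.ccr j k)
  simp only [map_mul, map_add] at h
  simpa [wA, wAp, apply_ite (RingQuot.mkAlgHom ℂ (WeylRel d)), map_one, map_zero] using h

lemma waa (d : ℕ) (j k : Fin d) : wA d j * wA d k = wA d k * wA d j := by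
  have h := RingQuot.mkAlgHom_rel ℂ (WeylRel.aa j k)
  simpa [wA, map_mul] using h

lemma wpp (d : ℕ) (j k : Fin d) : wAp d j * wAp d k = wAp d k * wAp d j := by
  have h := RingQuot.mkAlgHom_rel ℂ (WeylRel.pp j k)
  simpa [wAp, map_mul] using h

lemma a_mul_N (d : ℕ) (j : Fin d) :
    wA d j * numberOp d = (numberOp d + 1) * wA d j := by
  have h1 : ∀ k, wA d j * (wAp d k * wA d k)
      = wAp d k * wA d k * wA d j + (if j = k then 1 else 0) * wA d k := by
    intro k
    rw [← mul_assoc, wccr, add_mul, mul_assoc (wAp d k), waa, ← mul_assoc]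
  rw [numberOp, Finset.mul_sum]
  simp_rw [h1]
  rw [Finset.sum_add_distrib, add_mul, one_mul, Finset.sum_mul]
  congr 1
  simp

lemma p_mul_N' (d : ℕ) (j : Fin d) :
    wAp d j * numberOp d = (numberOp d - 1) * wAp d j := by
  have h1 : ∀ k, wAp d j * (wAp d k * wA d k)
      = wAp d k * wA d k * wAp d j - (if k = j then 1 else 0) * wAp d k := by
    intro k
    have hc : wAp d j * wA d k = wA d k * wAp d j - if k = j then 1 else 0 := by
      rw [eq_sub_iff_add_eq, ← wccr]
    rw [← mul_assoc, wpp, mul_assoc, hc, mul_sub, ← mul_assoc]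
    congr 1
    split_ifs <;> simp
  rw [numberOp, Finset.mul_sum]
  simp_rw [h1]
  rw [Finset.sum_sub_distrib, sub_mul, one_mul, Finset.sum_mul]
  congr 1
  simp

lemma a_aeval (d : ℕ) (j : Fin d) (f : Polynomial ℂ) :
    wA d j * aeval (numberOp d) f = aeval (numberOp d) (f.comp (X + 1)) * wA d j := by
  induction f using Polynomial.induction_on with
  | C a => simp [Algebra.commutes]
  | add p r hp hr => simp only [map_add, add_comp, mul_add, add_mul, hp, hr]
  | monomial n a ih =>
      have key : wA d j * numberOp d = (numberOp d + 1) * wA d j := by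
        rw [a_mul_N]
      rw [pow_succ, ← mul_assoc, map_mul, aeval_X, ← mul_assoc, ih, mul_assoc, key,
        ← mul_assoc]
      congr 1
      simp [mul_comp]

lemma p_aeval (d : ℕ) (j : Fin d) (f : Polynomial ℂ) :
    wAp d j * aeval (numberOp d) f = aeval (numberOp d) (f.comp (X - 1)) * wAp d j := by
  induction f using Polynomial.induction_on with
  | C a => simp [Algebra.commutes]
  | add p r hp hr => simp only [map_add, add_comp, mul_add, add_mul, hp, hr]
  | monomial n a ih =>
      have key : wAp d j * numberOp d = (numberOp d - 1) * wAp d j := by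
        rw [p_mul_N']
      rw [pow_succ, ← mul_assoc, map_mul, aeval_X, ← mul_assoc, ih, mul_assoc, key,
        ← mul_assoc]
      congr 1
      simp [mul_comp]

lemma sum_aap (d : ℕ) :
    ∑ j, wA d j * wAp d j = numberOp d + (d : ℂ) • 1 := by
  have : ∀ j : Fin d, wA d j * wAp d j = wAp d j * wA d j + 1 := by
    intro j; rw [wccr]; simp
  simp_rw [this]
  rw [Finset.sum_add_distrib, numberOp]
  congr 1
  rw [Finset.sum_const, Finset.card_univ, Fintype.card_fin, nsmul_eq_mul, mul_one,
    Algebra.smul_def, mul_one, map_natCast]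

noncomputable def Tpoly (q : ℝ) (d : ℕ) (f : Polynomial ℂ) : Polynomial ℂ :=
  ((1 - q : ℝ) : ℂ) ^ 2 • (f.comp (X + 1) * (X + C (d : ℂ))) +
  ((q : ℂ) * ((1 - q : ℝ) : ℂ)) • (f * X + (X + C (d : ℂ)) * f) +
  (q : ℂ) ^ 2 • (f.comp (X - 1) * X)

lemma aeval_XC (d : ℕ) : aeval (numberOp d) (X + C (d : ℂ)) = numberOp d + (d : ℂ) • 1 := by
  simp [Algebra.smul_def]

lemma hN (d : ℕ) : ∑ j, wAp d j * wA d j = numberOp d := rfl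

lemma sum1 (d : ℕ) (f : Polynomial ℂ) :
    ∑ j, wA d j * aeval (numberOp d) f * wAp d j
      = aeval (numberOp d) (f.comp (X + 1) * (X + C (d : ℂ))) := by
  simp_rw [a_aeval, mul_assoc]
  rw [← Finset.mul_sum, sum_aap, map_mul, aeval_XC]

lemma sum3 (d : ℕ) (f : Polynomial ℂ) :
    ∑ j, wAp d j * aeval (numberOp d) f * wA d j
      = aeval (numberOp d) (f.comp (X - 1) * X) := by
  simp_rw [p_aeval, mul_assoc]
  rw [← Finset.mul_sum, hN, map_mul, aeval_X]

lemma sum2 (d : ℕ) (f : Polynomial ℂ) :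
    ∑ j, (aeval (numberOp d) f * wAp d j * wA d j + wA d j * wAp d j * aeval (numberOp d) f)
      = aeval (numberOp d) (f * X + (X + C (d : ℂ)) * f) := by
  rw [Finset.sum_add_distrib]
  have h1 : ∑ j, aeval (numberOp d) f * wAp d j * wA d j
      = aeval (numberOp d) f * numberOp d := by
    simp_rw [mul_assoc]
    rw [← Finset.mul_sum, hN]
  have h2 : ∑ j, wA d j * wAp d j * aeval (numberOp d) f
      = (numberOp d + (d : ℂ) • 1) * aeval (numberOp d) f := by
    rw [← Finset.sum_mul, sum_aap]
  rw [h1, h2, map_add, map_mul, map_mul, aeval_X, aeval_XC]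

lemma Rq_aeval (d : ℕ) (q : ℝ) (Rq : Module.End ℂ (WeylAlgebra d))
    (hRq : ∀ w, Rq w =
      ((1 - q : ℝ) : ℂ) ^ 2 • ∑ j, wA d j * w * wAp d j +
      ((q : ℂ) * ((1 - q : ℝ) : ℂ)) • ∑ j, (w * wAp d j * wA d j + wA d j * wAp d j * w) +
      (q : ℂ) ^ 2 • ∑ j, wAp d j * w * wA d j) (f : Polynomial ℂ) :
    Rq (aeval (numberOp d) f) = aeval (numberOp d) (Tpoly q d f) := by
  rw [hRq, sum1, sum2, sum3]
  simp only [Tpoly, map_add, map_smul]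

lemma Rq_pow_one (d : ℕ) (q : ℝ) (Rq : Module.End ℂ (WeylAlgebra d))
    (hRq : ∀ w, Rq w =
      ((1 - q : ℝ) : ℂ) ^ 2 • ∑ j, wA d j * w * wAp d j +
      ((q : ℂ) * ((1 - q : ℝ) : ℂ)) • ∑ j, (w * wAp d j * wA d j + wA d j * wAp d j * w) +
      (q : ℂ) ^ 2 • ∑ j, wAp d j * w * wA d j) (k : ℕ) :
    (Rq ^ k) 1 = aeval (numberOp d) ((Tpoly q d)^[k] 1) := by
  induction k with
  | zero => simp
  | succ k ih =>
      rw [pow_succ', Module.End.mul_apply, ih, Rq_aeval d q Rq hRq,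
        Function.iterate_succ_apply']

lemma Tpoly_deg (q : ℝ) (d : ℕ) (f : Polynomial ℂ) (hf : f ≠ 0) :
    (Tpoly q d f).natDegree = f.natDegree + 1 ∧
    (Tpoly q d f).leadingCoeff = f.leadingCoeff := by
  set n := f.natDegree with hn
  set c := f.leadingCoeff with hc
  have hc0 : c ≠ 0 := leadingCoeff_ne_zero.mpr hf
  have hX1 : (X + 1 : Polynomial ℂ) = X + C 1 := by rw [C_1]
  have hXm1 : (X - 1 : Polynomial ℂ) = X + C (-1) := by
    rw [map_neg, C_1]; ring
  have hd1 : (X + (1:Polynomial ℂ)).natDegree = 1 := by rw [hX1, natDegree_X_add_C]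
  have hdm1 : (X - (1:Polynomial ℂ)).natDegree = 1 := by rw [hXm1, natDegree_X_add_C]
  have hg1d : (f.comp (X + 1)).natDegree = n := by
    rw [natDegree_comp, hd1, mul_one]
  have hg3d : (f.comp (X - 1)).natDegree = n := by
    rw [natDegree_comp, hdm1, mul_one]
  have hg1c : (f.comp (X + 1)).coeff n = c := by
    have := leadingCoeff_comp (p := f) (q := X + 1) (by rw [hd1]; omega)
    rw [leadingCoeff, hg1d] at this
    rw [this, hX1, leadingCoeff_X_add_C, one_pow, mul_one]
  have hg3c : (f.comp (X - 1)).coeff n = c := by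
    have := leadingCoeff_comp (p := f) (q := X - 1) (by rw [hdm1]; omega)
    rw [leadingCoeff, hg3d] at this
    rw [this, hXm1, leadingCoeff_X_add_C, one_pow, mul_one]
  have e1 : (f.comp (X + 1) * (X + C (d:ℂ))).coeff (n+1) = c := by
    rw [mul_add, coeff_add, coeff_mul_X, coeff_mul_C, hg1c,
      coeff_eq_zero_of_natDegree_lt (by omega : (f.comp (X+1)).natDegree < n + 1),
      zero_mul, add_zero]
  have e3 : (f.comp (X - 1) * X).coeff (n+1) = c := by
    rw [coeff_mul_X, hg3c]
  have e2 : (f * X + (X + C (d:ℂ)) * f).coeff (n+1) = 2 * c := by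
    rw [coeff_add, coeff_mul_X, add_mul, coeff_add, X_mul, coeff_mul_X, coeff_C_mul,
      coeff_eq_zero_of_natDegree_lt (by omega : f.natDegree < n + 1), mul_zero, add_zero]
    have : f.coeff n = c := coeff_natDegree
    rw [this]; ring
  have hcast : ((1 - q : ℝ) : ℂ) = 1 - (q : ℂ) := by push_cast; ring
  have ctot : (Tpoly q d f).coeff (n+1) = c := by
    simp only [Tpoly, coeff_add, coeff_smul, e1, e2, e3, smul_eq_mul, hcast]
    ring
  have hdX : (X + C (d:ℂ)).natDegree = 1 := natDegree_X_add_C _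
  have b1 : (f.comp (X + 1) * (X + C (d:ℂ))).natDegree ≤ n + 1 :=
    natDegree_mul_le.trans (by rw [hg1d, hdX])
  have b2 : (f * X + (X + C (d:ℂ)) * f).natDegree ≤ n + 1 := by
    refine (natDegree_add_le _ _).trans (max_le ?_ ?_)
    · exact natDegree_mul_le.trans (by simp [hn])
    · exact natDegree_mul_le.trans (by rw [hdX, ← hn]; omega)
  have b3 : (f.comp (X - 1) * X).natDegree ≤ n + 1 :=
    natDegree_mul_le.trans (by rw [hg3d]; simp)
  have hb : (Tpoly q d f).natDegree ≤ n + 1 := by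
    refine (natDegree_add_le _ _).trans (max_le ((natDegree_add_le _ _).trans (max_le ?_ ?_)) ?_)
    · exact (natDegree_smul_le _ _).trans b1
    · exact (natDegree_smul_le _ _).trans b2
    · exact (natDegree_smul_le _ _).trans b3
  have hdeg : (Tpoly q d f).natDegree = n + 1 :=
    le_antisymm hb (le_natDegree_of_ne_zero (by rw [ctot]; exact hc0))
  exact ⟨hdeg, by rw [leadingCoeff, hdeg, ctot]⟩

open MvPolynomial in
lemma pderiv_comm' {σ : Type*} (j k : σ) (p : MvPolynomial σ ℂ) :
    MvPolynomial.pderiv j (MvPolynomial.pderiv k p) =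
      MvPolynomial.pderiv k (MvPolynomial.pderiv j p) := by
  classical
  rcases eq_or_ne j k with rfl | h
  · rfl
  · induction p using MvPolynomial.induction_on' with
    | monomial s a =>
        simp only [pderiv_monomial]
        have hidx : s - Finsupp.single k 1 - Finsupp.single j 1
            = s - Finsupp.single j 1 - Finsupp.single k 1 := by
          ext i; simp [Finsupp.sub_apply]; omega
        have hjk : (s - Finsupp.single k 1 : σ →₀ ℕ) j = s j := by
          simp [Finsupp.sub_apply, Finsupp.single_eq_of_ne h]
        have hkj : (s - Finsupp.single j 1 : σ →₀ ℕ) k = s k := by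
          simp [Finsupp.sub_apply, Finsupp.single_eq_of_ne h.symm]
        rw [hidx, hjk, hkj]
        ring_nf
    | add p q hp hq => simp [hp, hq]

noncomputable def repGen (d : ℕ) : Fin d ⊕ Fin d → Module.End ℂ (MvPolynomial (Fin d) ℂ)
  | Sum.inl j => (MvPolynomial.pderiv j).toLinearMap
  | Sum.inr j => LinearMap.mulLeft ℂ (MvPolynomial.X j)

noncomputable def repF (d : ℕ) :
    FreeAlgebra ℂ (Fin d ⊕ Fin d) →ₐ[ℂ] Module.End ℂ (MvPolynomial (Fin d) ℂ) :=
  FreeAlgebra.lift ℂ (repGen d)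

lemma repF_rel (d : ℕ) : ∀ ⦃x y⦄, WeylRel d x y → repF d x = repF d y := by
  intro x y h
  induction h with
  | ccr j k =>
      simp only [map_mul, map_add, repF, FreeAlgebra.lift_ι_apply, apply_ite (FreeAlgebra.lift ℂ (repGen d)), map_one, map_zero]
      apply LinearMap.ext; intro p
      by_cases hjk : j = k <;>
        simp [hjk, repGen, Module.End.mul_apply, Derivation.leibniz, smul_eq_mul,
          MvPolynomial.pderiv_X_self, MvPolynomial.pderiv_X_of_ne, mul_comm, add_comm]
  | aa j k =>
      simp only [map_mul, repF, FreeAlgebra.lift_ι_apply]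
      apply LinearMap.ext; intro p
      simpa [repGen, Module.End.mul_apply] using pderiv_comm' j k p
  | pp j k =>
      simp only [map_mul, repF, FreeAlgebra.lift_ι_apply]
      apply LinearMap.ext; intro p
      simp [repGen, Module.End.mul_apply, LinearMap.mulLeft_apply, mul_left_comm]

noncomputable def rep (d : ℕ) :
    WeylAlgebra d →ₐ[ℂ] Module.End ℂ (MvPolynomial (Fin d) ℂ) :=
  RingQuot.liftAlgHom ℂ ⟨repF d, repF_rel d⟩

lemma rep_wA (d : ℕ) (j : Fin d) :
    rep d (wA d j) = (MvPolynomial.pderiv j).toLinearMap := by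
  rw [wA, rep, RingQuot.liftAlgHom_mkAlgHom_apply, repF, FreeAlgebra.lift_ι_apply]
  rfl

lemma rep_wAp (d : ℕ) (j : Fin d) :
    rep d (wAp d j) = LinearMap.mulLeft ℂ (MvPolynomial.X j) := by
  rw [wAp, rep, RingQuot.liftAlgHom_mkAlgHom_apply, repF, FreeAlgebra.lift_ι_apply]
  rfl

open MvPolynomial in
lemma repN_eigen (d : ℕ) (i0 : Fin d) (n : ℕ) :
    rep d (numberOp d) (X i0 ^ n) = (n : ℂ) • (X i0 ^ n : MvPolynomial (Fin d) ℂ) := by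
  classical
  rw [numberOp, map_sum]
  simp_rw [map_mul, rep_wA, rep_wAp]
  rw [LinearMap.sum_apply]
  have key : ∀ j : Fin d,
      ((LinearMap.mulLeft ℂ (X j) * (pderiv j).toLinearMap :
          Module.End ℂ (MvPolynomial (Fin d) ℂ))) (X i0 ^ n)
        = if j = i0 then (n : ℂ) • (X i0 ^ n : MvPolynomial (Fin d) ℂ) else 0 := by
    intro j
    rw [Module.End.mul_apply]
    rcases Nat.eq_zero_or_pos n with rfl | hn
    · simp [Derivation.coeFn_coe]
    · rcases eq_or_ne j i0 with rfl | hji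
      · rw [if_pos rfl, MvPolynomial.X_pow_eq_monomial]
        have hidx : Finsupp.single j n - Finsupp.single j 1 = Finsupp.single j (n-1) := by
          ext i
          rcases eq_or_ne i j with rfl | hij
          · simp
          · simp [Finsupp.single_eq_of_ne (Ne.symm hij)]
        have h2 : ((pderiv j).toLinearMap : MvPolynomial (Fin d) ℂ →ₗ[ℂ] _)
            (monomial (Finsupp.single j n) (1:ℂ)) = monomial (Finsupp.single j (n-1)) (n : ℂ) := by
          rw [Derivation.coeFn_coe, pderiv_monomial, hidx]
          simp
        rw [h2, LinearMap.mulLeft_apply]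
        have hX : (X j : MvPolynomial (Fin d) ℂ) = monomial (Finsupp.single j 1) 1 := rfl
        rw [hX, monomial_mul, one_mul, MvPolynomial.smul_monomial, smul_eq_mul, mul_one]
        have hadd : Finsupp.single j 1 + Finsupp.single j (n-1) = Finsupp.single j n := by
          rw [← Finsupp.single_add]
          congr 1
          omega
        rw [hadd]
      · rw [if_neg hji, MvPolynomial.X_pow_eq_monomial]
        have h2 : ((pderiv j).toLinearMap : MvPolynomial (Fin d) ℂ →ₗ[ℂ] _)
            (monomial (Finsupp.single i0 n) (1:ℂ)) = 0 := by
          rw [Derivation.coeFn_coe, pderiv_monomial]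
          simp [Finsupp.single_eq_of_ne hji]
        rw [h2, map_zero]
  simp_rw [key]
  simp

open MvPolynomial in
lemma aeval_rep_eigen (d : ℕ) (i0 : Fin d) (g : Polynomial ℂ) (n : ℕ) :
    Polynomial.aeval (rep d (numberOp d)) g (X i0 ^ n)
      = g.eval (n : ℂ) • (X i0 ^ n : MvPolynomial (Fin d) ℂ) := by
  have hpow : ∀ m : ℕ, ((rep d (numberOp d)) ^ m) (X i0 ^ n)
      = ((n : ℂ) ^ m) • (X i0 ^ n : MvPolynomial (Fin d) ℂ) := by
    intro m
    induction m with
    | zero => simp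
    | succ m ih =>
        rw [pow_succ', Module.End.mul_apply, ih, map_smul, repN_eigen, smul_smul, pow_succ',
          mul_comm]
  induction g using Polynomial.induction_on' with
  | add p r hp hr => simp [map_add, LinearMap.add_apply, hp, hr, add_smul]
  | monomial m a =>
      rw [Polynomial.aeval_monomial, Polynomial.eval_monomial]
      rw [Module.End.mul_apply, hpow, map_smul]
      rw [Module.algebraMap_end_apply, smul_smul, mul_comm]

lemma aevalN_inj (d : ℕ) (hd : 1 ≤ d) :
    Function.Injective (Polynomial.aeval (numberOp d) : Polynomial ℂ → WeylAlgebra d) := by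
  intro g1 g2 hEq
  set i0 : Fin d := ⟨0, hd⟩
  have h1 : Polynomial.aeval (rep d (numberOp d)) g1 = Polynomial.aeval (rep d (numberOp d)) g2 := by
    rw [Polynomial.aeval_algHom_apply, Polynomial.aeval_algHom_apply, hEq]
  have h2 : ∀ n : ℕ, g1.eval (n : ℂ) = g2.eval (n : ℂ) := by
    intro n
    have := LinearMap.congr_fun h1 (MvPolynomial.X i0 ^ n)
    rw [aeval_rep_eigen, aeval_rep_eigen] at this
    have hv : (MvPolynomial.X i0 ^ n : MvPolynomial (Fin d) ℂ) ≠ 0 :=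
      pow_ne_zero _ (MvPolynomial.X_ne_zero _)
    exact smul_left_injective ℂ hv (by simpa using this)
  have : g1 - g2 = 0 := by
    apply Polynomial.eq_zero_of_infinite_isRoot
    apply Set.infinite_of_injective_forall_mem (f := (Nat.cast : ℕ → ℂ)) Nat.cast_injective
    intro n
    simp [Polynomial.IsRoot, h2 n]
  exact sub_eq_zero.mp this

lemma omega_deg (q : ℝ) (d : ℕ) (k : ℕ) :
    ((Tpoly q d)^[k] 1).natDegree = k ∧ ((Tpoly q d)^[k] 1).leadingCoeff = 1 := by
  induction k with
  | zero => simp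
  | succ k ih =>
      have hne : (Tpoly q d)^[k] 1 ≠ 0 := by
        intro h
        rw [h] at ih
        simp at ih
      have := Tpoly_deg q d _ hne
      rw [Function.iterate_succ_apply', this.1, this.2, ih.1, ih.2]
      exact ⟨rfl, rfl⟩

theorem stmt10' (d : ℕ) (hd : 1 ≤ d) (q : ℝ) (hq : q ∈ Set.Ico (0 : ℝ) 1)
    (Rq : Module.End ℂ (WeylAlgebra d))
    (hRq : ∀ w, Rq w =
      ((1 - q : ℝ) : ℂ) ^ 2 • ∑ j, wA d j * w * wAp d j +
      ((q : ℂ) * ((1 - q : ℝ) : ℂ)) • ∑ j, (w * wAp d j * wA d j + wA d j * wAp d j * w) +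
      (q : ℂ) ^ 2 • ∑ j, wAp d j * w * wA d j) :
    (∀ k : ℕ, ∃! ω : Polynomial ℂ,
      ω.degree = (k : ℕ) ∧ (Rq ^ k) 1 = Polynomial.aeval (numberOp d) ω) ∧
    {w : WeylAlgebra d | ∃ p : Polynomial ℂ, w = Polynomial.aeval Rq p 1} =
      {w : WeylAlgebra d | ∃ p : Polynomial ℂ, w = Polynomial.aeval (numberOp d) p} := by
  constructor
  · intro k
    obtain ⟨hdeg, hlc⟩ := omega_deg q d k
    have hne : (Tpoly q d)^[k] 1 ≠ 0 := by
      intro h; rw [h] at hlc; simp at hlc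
    refine ⟨(Tpoly q d)^[k] 1, ⟨?_, Rq_pow_one d q Rq hRq k⟩, ?_⟩
    · rw [degree_eq_natDegree hne, hdeg]
    · rintro ω ⟨hdω, heq⟩
      apply aevalN_inj d hd
      rw [← heq, Rq_pow_one d q Rq hRq k]
  · ext w
    simp only [Set.mem_setOf_eq]
    constructor
    · rintro ⟨p, rfl⟩
      suffices h : ∀ p : Polynomial ℂ, ∃ g, aeval Rq p 1 = aeval (numberOp d) g by
        obtain ⟨g, hg⟩ := h p; exact ⟨g, hg⟩
      intro p
      induction p using Polynomial.induction_on' with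
      | add r s hr hs =>
          obtain ⟨gr, hgr⟩ := hr
          obtain ⟨gs, hgs⟩ := hs
          exact ⟨gr + gs, by rw [map_add, LinearMap.add_apply, hgr, hgs, map_add]⟩
      | monomial m a =>
          refine ⟨a • (Tpoly q d)^[m] 1, ?_⟩
          rw [Polynomial.aeval_monomial, Module.End.mul_apply, Module.algebraMap_end_apply,
            map_smul, Rq_pow_one d q Rq hRq m]
    · rintro ⟨g, rfl⟩
      suffices h : ∀ n : ℕ, ∀ g : Polynomial ℂ, g.natDegree ≤ n →
          ∃ p, aeval Rq p 1 = aeval (numberOp d) g by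
        obtain ⟨p, hp⟩ := h g.natDegree g le_rfl
        exact ⟨p, hp.symm⟩
      intro n
      induction n with
      | zero =>
          intro g hg
          rw [Polynomial.eq_C_of_natDegree_le_zero hg]
          refine ⟨C (g.coeff 0), ?_⟩
          rw [aeval_C, aeval_C, Module.algebraMap_end_apply, Algebra.algebraMap_eq_smul_one]
      | succ n ih =>
          intro g hg
          set c := g.coeff (n+1) with hc
          set ω := (Tpoly q d)^[n+1] 1 with hω
          obtain ⟨hωd, hωl⟩ := omega_deg q d (n+1)
          have hωd' : ω.natDegree = n + 1 := hωd
          have hco : ω.coeff (n+1) = 1 := by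
            have h := hωl
            rwa [Polynomial.leadingCoeff, hωd] at h
          have hdeg' : (g - c • ω).natDegree ≤ n := by
            apply Polynomial.natDegree_le_iff_coeff_eq_zero.mpr
            intro m hm
            rw [coeff_sub, coeff_smul, smul_eq_mul]
            by_cases hm1 : m = n + 1
            · subst hm1
              rw [hco, mul_one, ← hc, sub_self]
            · have hlt : n + 1 < m := by omega
              rw [coeff_eq_zero_of_natDegree_lt (by omega : g.natDegree < m),
                coeff_eq_zero_of_natDegree_lt (by omega : ω.natDegree < m), mul_zero, sub_zero]
          obtain ⟨p', hp'⟩ := ih (g - c • ω) hdeg'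
          refine ⟨p' + C c * X^(n+1), ?_⟩
          rw [map_add, LinearMap.add_apply, hp', map_mul, aeval_C, aeval_X_pow,
            Module.End.mul_apply, Module.algebraMap_end_apply, Rq_pow_one d q Rq hRq (n+1),
            ← hω, map_sub, map_smul]
          abel

/-- For every `k ∈ ℤ_{≥0}`, the element `η_k = R_q^k(I)` of the Weyl algebra
is a polynomial in the number operator `N` of exact degree `k`: there is a unique
polynomial `ω_k ∈ ℂ[t]` with `degree ω_k = k` and `η_k = ω_k(N)`.  Consequently the
subspace `{p(R_q)(I) : p ∈ ℂ[t]}` of the Weyl algebra equals `ℂ[N]`, independently of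
`q`. -/
theorem stmt10 (d : ℕ) (hd : 1 ≤ d) (q : ℝ) (hq : q ∈ Set.Ico (0 : ℝ) 1)
    (Rq : Module.End ℂ (WeylAlgebra d))
    (hRq : ∀ w, Rq w =
      ((1 - q : ℝ) : ℂ) ^ 2 • ∑ j, wA d j * w * wAp d j +
      ((q : ℂ) * ((1 - q : ℝ) : ℂ)) • ∑ j, (w * wAp d j * wA d j + wA d j * wAp d j * w) +
      (q : ℂ) ^ 2 • ∑ j, wAp d j * w * wA d j) :
    (∀ k : ℕ, ∃! ω : Polynomial ℂ,
      ω.degree = (k : ℕ) ∧ (Rq ^ k) 1 = Polynomial.aeval (numberOp d) ω) ∧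
    {w : WeylAlgebra d | ∃ p : Polynomial ℂ, w = Polynomial.aeval Rq p 1} =
      {w : WeylAlgebra d | ∃ p : Polynomial ℂ, w = Polynomial.aeval (numberOp d) p} :=
  stmt10' d hd q hq Rq hRq
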